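/- The set of all values of the series ∑_{n=1}^∞ 1/((n+1)(n+2)⋯(n+f(n))), as (f(n))_{n=1}^∞ ranges over all sequences of positive integers with f(n) → ∞ as n → ∞, is equal to the whole open interval (0, ∞). That is: for every real x > 0 there exists a function f : ℕ → ℕ with f(n) ≥ 1 for all n and lim_{n→∞} f(n) = ∞ such that ∑_{n=1}^∞ 1/∏_{i=1}^{f(n)} (n+i) = x, and conversely every such sum is a positive real number. -/

import Mathlib

open Filter Topology

namespace Stmt0Aux

/-- `a n k = 1 / ((n+1)(n+2)⋯(n+k))` as a real number. -/
noncomputable def a (n k : ℕ) : ℝ := (∏ i ∈ Finset.Icc 1 k, ((n : ℝ) + i))⁻¹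

lemma prod_pos (n k : ℕ) : 0 < ∏ i ∈ Finset.Icc 1 k, ((n : ℝ) + i) := by
  apply Finset.prod_pos
  intro i hi
  have : (1 : ℕ) ≤ i := (Finset.mem_Icc.mp hi).1
  have : (1 : ℝ) ≤ (i : ℝ) := by exact_mod_cast this
  positivity

lemma a_pos (n k : ℕ) : 0 < a n k := by
  unfold a; exact inv_pos.mpr (prod_pos n k)

lemma a_zero (n : ℕ) : a n 0 = 1 := by simp [a]

lemma a_one (n : ℕ) : a n 1 = ((n : ℝ) + 1)⁻¹ := by
  simp [a]

/-- `a n (k+1) * (n+k+1) = a n k`. -/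
lemma a_succ (n k : ℕ) : a n (k+1) * ((n : ℝ) + k + 1) = a n k := by
  unfold a
  rw [Finset.prod_Icc_succ_top (by omega : 1 ≤ k + 1)]
  have h1 : (0:ℝ) < ∏ i ∈ Finset.Icc 1 k, ((n : ℝ) + i) := prod_pos n k
  have h2 : (0:ℝ) < (n : ℝ) + (k+1 : ℕ) := by positivity
  rw [mul_inv]
  push_cast
  field_simp
  ring

/-- `a (n+1) k = (n+1) * a n (k+1)`. -/
lemma a_shift (n k : ℕ) : a (n+1) k = ((n : ℝ) + 1) * a n (k+1) := by
  unfold a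
  have key : ∏ i ∈ Finset.Icc 1 (k+1), ((n : ℝ) + i)
      = ((n : ℝ) + 1) * ∏ i ∈ Finset.Icc 1 k, ((n+1 : ℕ) + (i : ℝ)) := by
    induction k with
    | zero => simp
    | succ k ih =>
      rw [Finset.prod_Icc_succ_top (by omega : 1 ≤ k + 1 + 1), ih,
        Finset.prod_Icc_succ_top (by omega : 1 ≤ k + 1)]
      push_cast
      ring
  rw [key, mul_inv]
  have h2 : ((n:ℝ) + 1) ≠ 0 := by positivity
  field_simp

/-- telescoping: `a n k - a (n+1) k = k * a n (k+1)`. -/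
lemma a_telescope (n k : ℕ) : a n k - a (n+1) k = (k : ℝ) * a n (k+1) := by
  rw [← a_succ n k, a_shift n k]
  ring

lemma a_anti (n k : ℕ) : a n (k+1) ≤ a n k := by
  rw [← a_succ n k]
  nlinarith [a_pos n (k+1), Nat.cast_nonneg (α := ℝ) n, Nat.cast_nonneg (α := ℝ) k]

lemma a_anti_le (n : ℕ) {k j : ℕ} (h : k ≤ j) : a n j ≤ a n k := by
  induction j with
  | zero => have : k = 0 := by omega
            subst this; rfl
  | succ j ih =>
    rcases Nat.lt_or_ge k (j+1) with h' | h'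
    · exact le_trans (a_anti n j) (ih (by omega))
    · have : k = j + 1 := by omega
      subst this; rfl

lemma a_strict_anti {n : ℕ} (hn : 1 ≤ n) (k : ℕ) : a n (k+1) < a n k := by
  rw [← a_succ n k]
  have h1 : (1:ℝ) ≤ (n:ℝ) := by exact_mod_cast hn
  nlinarith [a_pos n (k+1), Nat.cast_nonneg (α := ℝ) k]

lemma a_half {n : ℕ} (hn : 1 ≤ n) (k : ℕ) : a n (k+1) ≤ a n k / 2 := by
  rw [← a_succ n k]
  have h1 : (1:ℝ) ≤ (n:ℝ) := by exact_mod_cast hn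
  nlinarith [a_pos n (k+1), Nat.cast_nonneg (α := ℝ) k]

lemma a_small {n : ℕ} (hn : 1 ≤ n) {r : ℝ} (hr : 0 < r) (K : ℕ) :
    ∃ m, K ≤ m ∧ a n m < r := by
  obtain ⟨j, hj⟩ := exists_pow_lt_of_lt_one (show 0 < r / a n K from div_pos hr (a_pos n K)) (by norm_num : (1:ℝ)/2 < 1)
  refine ⟨K + j, Nat.le_add_right _ _, ?_⟩
  have key : ∀ j, a n (K + j) ≤ a n K * (1/2)^j := by
    intro j
    induction j with
    | zero => simp
    | succ j ih =>
      have := a_half hn (K + j)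
      calc a n (K + (j+1)) = a n ((K + j) + 1) := by ring_nf
        _ ≤ a n (K + j) / 2 := a_half hn (K+j)
        _ ≤ (a n K * (1/2)^j) / 2 := by linarith
        _ = a n K * (1/2)^(j+1) := by ring
  have h2 := key j
  have h3 : a n K * (1/2)^j < a n K * (r / a n K) := by
    apply mul_lt_mul_of_pos_left hj (a_pos n K)
  have h4 : a n K * (r / a n K) = r := by
    rw [mul_div_assoc']
    exact mul_div_cancel_left₀ r (a_pos n K).ne' 
  linarith


lemma a_two (n : ℕ) : a n 2 = (((n:ℝ)+1) * ((n:ℝ)+2))⁻¹ := by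
  have h := a_succ n 1
  norm_num at h
  rw [a_one] at h
  have hp : ((n:ℝ)+1) ≠ 0 := by positivity
  have hq : ((n:ℝ)+2) ≠ 0 := by positivity
  rw [show ((n:ℝ)+1+1) = (n:ℝ)+2 by ring] at h
  field_simp at h ⊢
  linarith

lemma a_one_strict (n : ℕ) : a (n+1) 1 < a n 1 := by
  rw [a_one, a_one]
  have h1 : (0:ℝ) < (n:ℝ)+1 := by positivity
  rw [inv_lt_inv₀ (by push_cast; linarith) h1]
  push_cast; linarith

/-- ratio identity: `a n k * (n+1) = a (n+1) k * (n+k+1)` -/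
lemma a_ratio (n k : ℕ) : a n k * ((n:ℝ)+1) = a (n+1) k * ((n:ℝ)+(k:ℝ)+1) := by
  rw [a_shift n k, ← a_succ n k]
  ring

/-- `S n k = ∑_{m ≥ n} a m k` (valid for `k ≥ 2`), in closed form. -/
noncomputable def S (n k : ℕ) : ℝ := a n (k-1) / ((k : ℝ) - 1)

lemma S_eq1 (n L : ℕ) (hL : 1 ≤ L) : S n (L+1) = a n L / (L:ℝ) := by
  unfold S
  have h1 : L + 1 - 1 = L := by omega
  rw [h1]
  have h2 : ((L+1 : ℕ) : ℝ) - 1 = (L:ℝ) := by push_cast; ring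
  rw [h2]

lemma S_pos (n L : ℕ) (hL : 1 ≤ L) : 0 < S n (L+1) := by
  rw [S_eq1 n L hL]
  have := a_pos n L
  have hL' : (0:ℝ) < (L:ℝ) := by exact_mod_cast hL
  positivity

/-- `S n (L+1) = a n (L+1) + S (n+1) (L+1)`. -/
lemma S_rec (n L : ℕ) (hL : 1 ≤ L) : S n (L+1) = a n (L+1) + S (n+1) (L+1) := by
  rw [S_eq1 n L hL, S_eq1 (n+1) L hL]
  have ht := a_telescope n L
  have hL' : (0:ℝ) < (L:ℝ) := by exact_mod_cast hL
  field_simp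
  nlinarith [ht]

lemma a_lt_S (n L : ℕ) (hL : 1 ≤ L) : a n (L+1) < S n (L+1) := by
  have h1 := S_rec n L hL
  have h2 := S_pos (n+1) L hL
  linarith

lemma S_le (n L : ℕ) (hL : 1 ≤ L) : S n (L+1) ≤ a n 1 := by
  rw [S_eq1 n L hL]
  have h1 : a n L ≤ a n 1 := a_anti_le n hL
  have h3 : 0 < a n L := a_pos n L
  have hL' : (1:ℝ) ≤ (L:ℝ) := by exact_mod_cast hL
  calc a n L / (L:ℝ) ≤ a n L / 1 := by
        apply div_le_div_of_nonneg_left (le_of_lt h3) one_pos hL'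
    _ = a n L := by ring
    _ ≤ a n 1 := h1

lemma S_shift (n L : ℕ) (hL : 1 ≤ L) : S (n+1) (L+1) = ((n:ℝ)+1) * a n (L+1) / (L:ℝ) := by
  rw [S_eq1 (n+1) L hL, a_shift n L]

/-- `a n (L+1) ≤ S (n+1) (L+1)` provided `L ≤ n + 1`. -/
lemma a_le_S (n L : ℕ) (hL : 1 ≤ L) (h : L ≤ n+1) : a n (L+1) ≤ S (n+1) (L+1) := by
  rw [S_shift n L hL]
  have h3 : 0 < a n (L+1) := a_pos n (L+1)
  have hL' : (0:ℝ) < (L:ℝ) := by exact_mod_cast hL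
  rw [le_div_iff₀ hL']
  have : ((L:ℝ)) ≤ (n:ℝ)+1 := by exact_mod_cast h
  nlinarith

/-- W1: `L * a m (L+1) ≤ S (m+2) (L+1)` for `2 ≤ L`, `L^3 ≤ m`. -/
lemma W1 {L m : ℕ} (hL : 2 ≤ L) (hm : L^3 ≤ m) :
    (L : ℝ) * a m (L+1) ≤ S (m+2) (L+1) := by
  have hL1 : 1 ≤ L := by omega
  rw [show m + 2 = (m+1)+1 by ring, S_shift (m+1) L hL1]
  set t := a m (L+1) with ht
  have h1 : a (m+1) L = ((m:ℝ)+1) * t := a_shift m L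
  have h2 : a (m+1) (L+1) * (((m+1:ℕ):ℝ) + (L:ℝ) + 1) = a (m+1) L := a_succ (m+1) L
  have hden : (0:ℝ) < (m:ℝ)+(L:ℝ)+2 := by positivity
  have h2' : a (m+1) (L+1) = ((m:ℝ)+1) * t / ((m:ℝ)+(L:ℝ)+2) := by
    have hc : (((m+1:ℕ):ℝ) + (L:ℝ) + 1) = ((m:ℝ)+(L:ℝ)+2) := by push_cast; ring
    rw [hc] at h2
    rw [h1] at h2
    rw [eq_div_iff (ne_of_gt hden)]
    exact h2
  rw [h2']
  have hL' : (0:ℝ) < (L:ℝ) := by exact_mod_cast hL1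
  rw [le_div_iff₀ hL']
  have ht0 : 0 < t := a_pos m (L+1)
  have hmr : ((L:ℝ))^3 ≤ (m:ℝ) := by exact_mod_cast hm
  have hLr : (2:ℝ) ≤ (L:ℝ) := by exact_mod_cast hL
  have key : (L:ℝ)^2 * ((m:ℝ)+(L:ℝ)+2) ≤ ((m:ℝ)+1)*((m:ℝ)+2) := by
    nlinarith [sq_nonneg ((L:ℝ)), sq_nonneg ((m:ℝ)), mul_nonneg (sq_nonneg (L:ℝ)) (by linarith : (0:ℝ) ≤ (L:ℝ))]
  have expand : (((m+1:ℕ):ℝ)+1) * (((m:ℝ)+1) * t / ((m:ℝ)+(L:ℝ)+2))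
      = ((m:ℝ)+2) * ((m:ℝ)+1) * t / ((m:ℝ)+(L:ℝ)+2) := by push_cast; ring
  rw [expand, le_div_iff₀ hden]
  nlinarith [key, ht0]

/-- Lemma C: `a v L - a v (L+1) + S (v+1) (L+1) < S (v+1) L`, for `2 ≤ L`, `L^2 ≤ v`. -/
lemma LemC {L v : ℕ} (hL : 2 ≤ L) (hv : L^2 ≤ v) :
    a v L - a v (L+1) + S (v+1) (L+1) < S (v+1) L := by
  obtain ⟨K, rfl⟩ : ∃ K, L = K + 2 := ⟨L - 2, by omega⟩
  set t := a v (K+3) with htdef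
  have ht0 : 0 < t := a_pos v (K+3)
  have hA : a v (K+2) = t * ((v:ℝ)+(K:ℝ)+3) := by
    have h := a_succ v (K+2)
    have hc : ((v:ℝ) + ((K+2:ℕ):ℝ) + 1) = ((v:ℝ)+(K:ℝ)+3) := by push_cast; ring
    rw [hc] at h
    rw [← h]
  have hS1 : S (v+1) (K+2+1) = ((v:ℝ)+1) * t / ((K:ℝ)+2) := by
    rw [S_shift v (K+2) (by omega)]
    have hc : ((K+2:ℕ):ℝ) = (K:ℝ)+2 := by push_cast; ring
    rw [hc]
  have hS2 : S (v+1) (K+2) = ((v:ℝ)+1) * a v (K+2) / ((K:ℝ)+1) := by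
    rw [show K + 2 = (K+1)+1 from rfl, S_shift v (K+1) (by omega)]
    have hc : ((K+1:ℕ):ℝ) = (K:ℝ)+1 := by push_cast; ring
    rw [hc]
  rw [hS1, hS2, hA]
  have hvr : (((K:ℝ))+2)^2 ≤ (v:ℝ) := by exact_mod_cast hv
  have hK : (0:ℝ) ≤ (K:ℝ) := Nat.cast_nonneg K
  have hP : (0:ℝ) < (K:ℝ)+2 := by positivity
  have hQ : (0:ℝ) < (K:ℝ)+1 := by positivity
  rw [← sub_pos]
  have expand : ((v:ℝ) + 1) * (t * ((v:ℝ) + (K:ℝ) + 3)) / ((K:ℝ) + 1)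
      - (t * ((v:ℝ) + (K:ℝ) + 3) - t + ((v:ℝ) + 1) * t / ((K:ℝ) + 2))
      = (((v:ℝ)+1)*(t*((v:ℝ)+(K:ℝ)+3))*((K:ℝ)+2)
        - ((t*((v:ℝ)+(K:ℝ)+3) - t)*(((K:ℝ)+1)*((K:ℝ)+2)) + ((v:ℝ)+1)*t*((K:ℝ)+1)))
        / (((K:ℝ)+1)*((K:ℝ)+2)) := by
    field_simp
  rw [expand]
  apply div_pos ?_ (by positivity)
  have hv4 : (4:ℝ) ≤ (v:ℝ) := by nlinarith
  have h1 : (K:ℝ)^2 + 2*(K:ℝ) - 1 ≤ (v:ℝ) := by nlinarith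
  have hInner : (v:ℝ)^2 + 2*(v:ℝ) ≤ ((v:ℝ)+1)*((v:ℝ)+(K:ℝ)+3) - ((v:ℝ)+(K:ℝ)+2)*((K:ℝ)+1) := by
    nlinarith [h1]
  have hPpos : 0 < ((v:ℝ)+1)*((v:ℝ)+(K:ℝ)+3)*((K:ℝ)+2)
      - ((v:ℝ)+(K:ℝ)+2)*(((K:ℝ)+1)*((K:ℝ)+2)) - ((v:ℝ)+1)*((K:ℝ)+1) := by
    nlinarith [mul_le_mul_of_nonneg_left hInner (show (0:ℝ) ≤ (K:ℝ)+2 by linarith), hv4,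
      mul_nonneg hK (show (0:ℝ) ≤ (v:ℝ) by linarith)]
  nlinarith [mul_pos ht0 hPpos]

/-- W3: `S (m+2) (L+1) + (L-1) * a (m+1) (L+1) < a (m+3) L`, for `2 ≤ L`, `16 L ≤ m`. -/
lemma W3 {L m : ℕ} (hL : 2 ≤ L) (hm : 16*L ≤ m) :
    S (m+2) (L+1) + ((L:ℝ)-1) * a (m+1) (L+1) < a (m+3) L := by
  have hL1 : 1 ≤ L := by omega
  set A := a (m+3) L with hAdef
  have hA0 : 0 < A := a_pos (m+3) L
  have hm3 : (0:ℝ) < (m:ℝ)+3 := by positivity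
  have hm2 : (0:ℝ) < (m:ℝ)+2 := by positivity
  have hmL2 : (0:ℝ) < (m:ℝ)+(L:ℝ)+2 := by positivity
  have hLr : (2:ℝ) ≤ (L:ℝ) := by exact_mod_cast hL
  have hmr : 16*(L:ℝ) ≤ (m:ℝ) := by exact_mod_cast hm
  have hL0 : (0:ℝ) < (L:ℝ) := by linarith
  have r1 : a (m+2) L * ((m:ℝ)+3) = A * ((m:ℝ)+(L:ℝ)+3) := by
    have h := a_ratio (m+2) L
    push_cast at h ⊢
    linarith
  have r2 : a (m+1) L * ((m:ℝ)+2) = a (m+2) L * ((m:ℝ)+(L:ℝ)+2) := by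
    have h := a_ratio (m+1) L
    push_cast at h ⊢
    linarith
  have r3 : a (m+1) (L+1) * ((m:ℝ)+(L:ℝ)+2) = a (m+1) L := by
    have h := a_succ (m+1) L
    push_cast at h ⊢
    linarith
  have d1 : a (m+2) L = A * ((m:ℝ)+(L:ℝ)+3) / ((m:ℝ)+3) := by
    rw [eq_div_iff (ne_of_gt hm3)]; linarith
  have d3' : a (m+1) (L+1) * (((m:ℝ)+3)*((m:ℝ)+2)) * ((m:ℝ)+(L:ℝ)+2)
      = (A*((m:ℝ)+(L:ℝ)+3)) * ((m:ℝ)+(L:ℝ)+2) := by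
    have e1 : a (m+1) (L+1) * (((m:ℝ)+3)*((m:ℝ)+2)) * ((m:ℝ)+(L:ℝ)+2)
        = (a (m+1) (L+1) * ((m:ℝ)+(L:ℝ)+2)) * (((m:ℝ)+3)*((m:ℝ)+2)) := by ring
    rw [e1, r3]
    calc a (m+1) L * (((m:ℝ)+3)*((m:ℝ)+2)) = (a (m+1) L * ((m:ℝ)+2)) * ((m:ℝ)+3) := by ring
      _ = (a (m+2) L * ((m:ℝ)+(L:ℝ)+2)) * ((m:ℝ)+3) := by rw [r2]
      _ = (a (m+2) L * ((m:ℝ)+3)) * ((m:ℝ)+(L:ℝ)+2) := by ring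
      _ = (A*((m:ℝ)+(L:ℝ)+3)) * ((m:ℝ)+(L:ℝ)+2) := by rw [r1]
  have d3'' : a (m+1) (L+1) * (((m:ℝ)+3)*((m:ℝ)+2)) = A*((m:ℝ)+(L:ℝ)+3) :=
    mul_right_cancel₀ (ne_of_gt hmL2) d3'
  have d3 : a (m+1) (L+1) = A * ((m:ℝ)+(L:ℝ)+3) / (((m:ℝ)+3) * ((m:ℝ)+2)) := by
    rw [eq_div_iff (by positivity)]; exact d3''
  have r4 : S (m+2) (L+1) = A * ((m:ℝ)+(L:ℝ)+3) / (((m:ℝ)+3) * (L:ℝ)) := by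
    rw [S_eq1 (m+2) L hL1, d1]
    field_simp
  rw [r4, d3, ← sub_pos]
  have expand : A - (A * ((m:ℝ)+(L:ℝ)+3) / (((m:ℝ)+3) * (L:ℝ))
      + ((L:ℝ)-1) * (A * ((m:ℝ)+(L:ℝ)+3) / (((m:ℝ)+3) * ((m:ℝ)+2))))
      = A * ((L:ℝ)*((m:ℝ)+2)*((m:ℝ)+3) - ((m:ℝ)+2)*((m:ℝ)+(L:ℝ)+3)
          - (L:ℝ)*((L:ℝ)-1)*((m:ℝ)+(L:ℝ)+3)) / ((L:ℝ)*((m:ℝ)+2)*((m:ℝ)+3)) := by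
    field_simp
    ring
  rw [expand]
  apply div_pos ?_ (by positivity)
  apply mul_pos hA0
  have hL3 : (L:ℝ) + 3 ≤ (m:ℝ) := by linarith
  have hT1 : (L:ℝ) < ((L:ℝ)-1)*((m:ℝ)+3-2*(L:ℝ)) := by
    nlinarith [mul_le_mul_of_nonneg_left (show (14:ℝ)*(L:ℝ)+3 ≤ (m:ℝ)+3-2*(L:ℝ) by linarith)
      (show (0:ℝ) ≤ (L:ℝ)-1 by linarith)]
  nlinarith [mul_pos hm2 (show (0:ℝ) < ((L:ℝ)-1)*((m:ℝ)+3-2*(L:ℝ)) - (L:ℝ) by linarith),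
    mul_nonneg (mul_nonneg (show (0:ℝ) ≤ (L:ℝ) by linarith) (show (0:ℝ) ≤ (L:ℝ)-1 by linarith))
      (show (0:ℝ) ≤ (m:ℝ)+1-(L:ℝ) by linarith)]

/-! ### The greedy construction -/

/-- admissible choices at step `v` with remainder `r` and current floor `L`. -/
def Q (v : ℕ) (r : ℝ) (L m : ℕ) : Prop :=
  L ≤ m ∧ a v m < r ∧ r - a v m ≠ S (v+1) (L+1)

attribute [local instance] Classical.propDecidable

lemma Q_exists {v : ℕ} (hv : 1 ≤ v) {r : ℝ} (hr : 0 < r) (L : ℕ) : ∃ m, Q v r L m := by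
  obtain ⟨m, hm1, hm2⟩ := a_small hv hr L
  by_cases hc : r - a v m ≠ S (v+1) (L+1)
  · exact ⟨m, hm1, hm2, hc⟩
  · push_neg at hc
    refine ⟨m+1, by omega, lt_trans (a_strict_anti hv m) hm2, ?_⟩
    rw [← hc]
    intro h
    have : a v (m+1) = a v m := by linarith
    have := a_strict_anti hv m
    linarith

/-- the chosen index. -/
noncomputable def pick (v : ℕ) (r : ℝ) (L : ℕ) : ℕ :=
  if h : ∃ m, Q v r L m then Nat.find h else L

lemma pick_spec {v : ℕ} (hv : 1 ≤ v) {r : ℝ} (hr : 0 < r) (L : ℕ) : Q v r L (pick v r L) := by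
  rw [pick, dif_pos (Q_exists hv hr L)]
  exact Nat.find_spec (Q_exists hv hr L)

lemma pick_min {v : ℕ} (hv : 1 ≤ v) {r : ℝ} (hr : 0 < r) (L : ℕ) {m : ℕ}
    (hm : Q v r L m) : pick v r L ≤ m := by
  rw [pick, dif_pos (Q_exists hv hr L)]
  exact Nat.find_le hm

/-- the state: `(st x n).1` is the remainder after `n` steps, `(st x n).2` the floor
for step `n+1`. -/
noncomputable def st (x : ℝ) : ℕ → ℝ × ℕ
  | 0 => (x, 1)
  | n+1 =>
    let s := st x n
    let m := pick (n+1) s.1 s.2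
    let r' := s.1 - a (n+1) m
    (r', if r' ≤ S (n+2) (s.2+1) ∧ (s.2+1)^2 ≤ n+1 then s.2+1 else s.2)

noncomputable def rr (x : ℝ) (n : ℕ) : ℝ := (st x n).1
noncomputable def LL (x : ℝ) (n : ℕ) : ℕ := (st x n).2

noncomputable def ff (x : ℝ) : ℕ → ℕ
  | 0 => 1
  | n+1 => pick (n+1) (rr x n) (LL x n)

lemma rr_zero (x : ℝ) : rr x 0 = x := rfl
lemma LL_zero (x : ℝ) : LL x 0 = 1 := rfl

lemma rr_succ (x : ℝ) (n : ℕ) : rr x (n+1) = rr x n - a (n+1) (ff x (n+1)) := rfl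

lemma LL_succ (x : ℝ) (n : ℕ) : LL x (n+1) =
    if rr x (n+1) ≤ S (n+2) (LL x n + 1) ∧ (LL x n + 1)^2 ≤ n+1 then LL x n + 1
    else LL x n := rfl

lemma LL_one_le (x : ℝ) (n : ℕ) : 1 ≤ LL x n := by
  induction n with
  | zero => exact le_refl 1
  | succ n ih =>
    rw [LL_succ]
    split <;> omega

lemma LL_mono_succ (x : ℝ) (n : ℕ) : LL x n ≤ LL x (n+1) := by
  rw [LL_succ]; split <;> omega

lemma LL_succ_le (x : ℝ) (n : ℕ) : LL x (n+1) ≤ LL x n + 1 := by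
  rw [LL_succ]; split <;> omega

lemma LL_mono (x : ℝ) : Monotone (LL x) := monotone_nat_of_le_succ (LL_mono_succ x)

lemma pick_eq_noclash {v : ℕ} (hv : 1 ≤ v) {r : ℝ} (hr : 0 < r) {L : ℕ}
    (hA : a v L < r) (hne : r - a v L ≠ S (v+1) (L+1)) : pick v r L = L := by
  have h1 := pick_min hv hr L (⟨le_refl L, hA, hne⟩ : Q v r L L)
  have h2 := (pick_spec hv hr L).1
  omega

lemma pick_eq_clash {v : ℕ} (hv : 1 ≤ v) {r : ℝ} (hr : 0 < r) {L : ℕ}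
    (hA : a v L < r) (hclash : r - a v L = S (v+1) (L+1)) : pick v r L = L + 1 := by
  have hQ : Q v r L (L+1) := by
    refine ⟨by omega, lt_trans (a_strict_anti hv L) hA, ?_⟩
    rw [← hclash]
    intro h
    have : a v (L+1) = a v L := by linarith
    have := a_strict_anti hv L
    linarith
  have h1 := pick_min hv hr L hQ
  have h2 := (pick_spec hv hr L).1
  rcases Nat.lt_or_ge (pick v r L) (L+1) with h | h
  · exfalso
    have : pick v r L = L := by omega
    have h3 := (pick_spec hv hr L).2.2
    rw [this] at h3
    exact h3 hclash
  · omega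

/-- The main invariant. -/
lemma inv (x : ℝ) (hx : 0 < x) (n : ℕ) :
    0 < rr x n ∧ (2 ≤ LL x n → rr x n < S (n+1) (LL x n) ∧ (LL x n)^2 ≤ n) := by
  induction n with
  | zero =>
    refine ⟨hx, ?_⟩
    rw [LL_zero]; omega
  | succ n ih =>
    obtain ⟨hr, hinv⟩ := ih
    have hv : 1 ≤ n + 1 := by omega
    set L := LL x n with hLdef
    set f := ff x (n+1) with hfdef
    have hQ : Q (n+1) (rr x n) L f := pick_spec hv hr L
    obtain ⟨hfL, hfa, hfne⟩ := hQ
    have hrs : rr x (n+1) = rr x n - a (n+1) f := rr_succ x n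
    have hr' : 0 < rr x (n+1) := by rw [hrs]; linarith
    refine ⟨hr', ?_⟩
    show 2 ≤ LL x (n+1) → rr x (n+1) < S (n+2) (LL x (n+1)) ∧ (LL x (n+1))^2 ≤ n+1
    have hfne2 : rr x n - a (n+1) f ≠ S (n+2) (L+1) := hfne
    by_cases hcond : rr x (n+1) ≤ S (n+2) (L + 1) ∧ (L+1)^2 ≤ n+1
    · -- raise
      have hLs : LL x (n+1) = L + 1 := by rw [LL_succ, if_pos hcond]
      intro _
      rw [hLs]
      constructor
      · refine lt_of_le_of_ne hcond.1 ?_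
        rw [hrs]
        exact hfne2
      · exact hcond.2
    · -- no raise
      have hLs : LL x (n+1) = L := by rw [LL_succ, if_neg hcond]
      rw [hLs]
      intro h2
      obtain ⟨hi2, hi3⟩ := hinv h2
      refine ⟨?_, by omega⟩
      obtain ⟨M, hM⟩ : ∃ M, L = M + 1 := ⟨L - 1, by omega⟩
      have hM1 : 1 ≤ M := by omega
      by_cases hA : a (n+1) L < rr x n
      · by_cases hcl : rr x n - a (n+1) L = S (n+2) (L+1)
        · -- clash: f = L + 1
          have hfe : f = L + 1 := pick_eq_clash hv hr hA hcl
          have hL2 : L^2 ≤ n + 1 := by omega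
          have hlemc := LemC (v := n+1) h2 hL2
          rw [hrs, hfe]
          have heq : rr x n - a (n+1) (L+1) = a (n+1) L - a (n+1) (L+1) + S (n+2) (L+1) := by
            linarith [hcl]
          rw [heq]
          exact hlemc
        · -- normal step at level L
          have hfe : f = L := pick_eq_noclash hv hr hA hcl
          have hrec : S (n+1) L = a (n+1) L + S (n+2) L := by
            rw [hM]; exact S_rec (n+1) M hM1
          rw [hrs, hfe]
          linarith
      · -- B-step
        push_neg at hA
        have hstep : a (n+1) L ≤ S (n+2) L := by
          rw [hM]
          apply a_le_S (n+1) M hM1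
          have : L ≤ n := by nlinarith [hi3]
          omega
        rw [hrs]
        have hpos := a_pos (n+1) f
        have hle : a (n+1) f ≤ a (n+1) L := a_anti_le (n+1) hfL
        linarith

lemma rr_pos (x : ℝ) (hx : 0 < x) (n : ℕ) : 0 < rr x n := (inv x hx n).1

lemma ff_succ_eq (x : ℝ) (n : ℕ) : ff x (n+1) = pick (n+1) (rr x n) (LL x n) := rfl

/-- if the floor never rises after `N`, contradiction. -/
lemma noraise (x : ℝ) (hx : 0 < x) (N : ℕ)
    (hcon : ∀ n, N ≤ n → LL x n = LL x N) : False := by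
  set L := LL x N with hLdef
  have hL1 : 1 ≤ L := LL_one_le x N
  set N₂ := N + (L+1)^3 + (L+1)^2 + 16*L + L^3 + 100 with hN₂def
  -- raise failure
  have hstar : ∀ m, N + (L+1)^2 + 1 ≤ m → S (m+1) (L+1) < rr x m := by
    intro m hm
    obtain ⟨k, rfl⟩ : ∃ k, m = k + 1 := ⟨m - 1, by omega⟩
    have h1 : LL x (k+1) = L := hcon (k+1) (by omega)
    have h2 : LL x k = L := hcon k (by omega)
    rw [LL_succ, h2] at h1
    by_contra hle
    push_neg at hle
    rw [if_pos ⟨by rwa [show k+1+1 = k+2 from rfl], by omega⟩] at h1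
    omega
  -- steps occur relative to the constant floor L
  have hffn : ∀ m, N ≤ m → ff x (m+1) = pick (m+1) (rr x m) L := by
    intro m hm
    rw [ff_succ_eq, hcon m hm]
  have hrs : ∀ m, N ≤ m → rr x (m+1) = rr x m - a (m+1) (pick (m+1) (rr x m) L) := by
    intro m hm
    rw [rr_succ, hffn m hm]
  -- A-step with no clash: the step takes exactly `a (m+1) L` and then a raise is forced
  by_cases hBex : ∃ m, N₂ ≤ m ∧ rr x m ≤ a (m+1) L
  · -- B-regime forever
    obtain ⟨m₀, hm₀, hB₀⟩ := hBex
    have hL2 : 2 ≤ L := by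
      by_contra hL2
      have : L = 1 := by omega
      have h1 := hstar m₀ (by omega)
      rw [this] at h1 hB₀
      rw [S_eq1 (m₀+1) 1 (le_refl 1)] at h1
      simp at h1
      linarith
    have Breg : ∀ k, rr x (m₀+k) ≤ a (m₀+k+1) L := by
      intro k
      induction k with
      | zero => exact hB₀
      | succ k ih =>
        set m := m₀ + k with hmdef
        have hmN : N ≤ m := by omega
        have hmN' : N ≤ m + 1 := by omega
        by_contra hA'
        push_neg at hA'
        rw [show m₀ + (k+1) = m + 1 from rfl, show m + 1 + 1 = m + 2 from rfl] at hA'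
        -- step m+2 is an A-step with no clash, forcing a raise
        have hr1 : 0 < rr x (m+1) := rr_pos x hx (m+1)
        have htel : a (m+1) L - a (m+2) L = (L:ℝ) * a (m+1) (L+1) := a_telescope (m+1) L
        have hW1 : (L:ℝ) * a (m+1) (L+1) ≤ S (m+3) (L+1) := by
          have := W1 (L := L) (m := m+1) hL2 (by omega)
          rwa [show m+1+2 = m+3 from rfl] at this
        have hrlt : rr x (m+1) < a (m+1) L := by
          have := hrs m hmN
          have hpos := a_pos (m+1) (pick (m+1) (rr x m) L)
          linarith [ih]
        have hnc : rr x (m+1) - a (m+2) L ≠ S (m+3) (L+1) := by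
          intro h
          have : rr x (m+1) = S (m+3) (L+1) + a (m+2) L := by linarith
          linarith [hrlt, htel, hW1]
        have hfe : pick (m+2) (rr x (m+1)) L = L :=
          pick_eq_noclash (by omega) hr1 hA' (by rwa [show m+2+1 = m+3 from rfl])
        have hval : rr x (m+2) = rr x (m+1) - a (m+2) L := by
          rw [hrs (m+1) hmN', hfe]
        -- the raise condition holds at the transition to m+2
        have hcond : rr x (m+2) ≤ S (m+3) (L+1) ∧ (L+1)^2 ≤ m+2 := by
          constructor
          · rw [hval]; linarith [hrlt, htel, hW1]
          · omega
        have hLL1 : LL x (m+1) = L := hcon (m+1) hmN'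
        have hLLs := LL_succ x (m+1)
        rw [hLL1, show m+1+1 = m+2 from rfl, show m+1+2 = m+3 from rfl] at hLLs
        rw [if_pos hcond] at hLLs
        have := hcon (m+2) (by omega)
        omega
    -- the quantity L * rr - a is nondecreasing and positive, but tends to 0
    have hU : ∀ k, (L:ℝ) * rr x m₀ - a (m₀+1) L ≤ (L:ℝ) * rr x (m₀+k) - a (m₀+k+1) L := by
      intro k
      induction k with
      | zero => exact le_refl _
      | succ k ih =>
        set m := m₀ + k with hmdef
        have hmN : N ≤ m := by omega
        have hfge : L + 1 ≤ pick (m+1) (rr x m) L := by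
          obtain ⟨hsp1, hsp2, -⟩ := pick_spec (v := m+1) (by omega) (rr_pos x hx m) L
          rcases Nat.lt_or_ge L (pick (m+1) (rr x m) L) with h | h
          · omega
          · exfalso
            have hEq : pick (m+1) (rr x m) L = L := by omega
            rw [hEq] at hsp2
            linarith [Breg k]
        have hanti : a (m+1) (pick (m+1) (rr x m) L) ≤ a (m+1) (L+1) :=
          a_anti_le (m+1) hfge
        have htel : a (m+1) L - a (m+2) L = (L:ℝ) * a (m+1) (L+1) := a_telescope (m+1) L
        have hstep := hrs m hmN
        have hL0 : (0:ℝ) ≤ (L:ℝ) := Nat.cast_nonneg L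
        have : (L:ℝ) * rr x (m+1) - a (m+2) L ≥ (L:ℝ) * rr x m - a (m+1) L := by
          rw [hstep]
          have := mul_le_mul_of_nonneg_left hanti hL0
          nlinarith
        rw [show m₀ + (k+1) = m + 1 from rfl, show m+1+1 = m+2 from rfl]
        linarith
    -- positivity of U at m₀
    have hU₀ : 0 < (L:ℝ) * rr x m₀ - a (m₀+1) L := by
      have h1 := hstar m₀ (by omega)
      rw [S_eq1 (m₀+1) L hL1] at h1
      have hL0 : (0:ℝ) < (L:ℝ) := by exact_mod_cast hL1
      rw [div_lt_iff₀ hL0] at h1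
      nlinarith
    set U₀ := (L:ℝ) * rr x m₀ - a (m₀+1) L with hU₀def
    obtain ⟨K, hK⟩ := exists_nat_gt ((L:ℝ)/U₀)
    have hone : a (m₀+K+1) 1 * ((m₀:ℝ)+(K:ℝ)+2) = 1 := by
      rw [a_one]
      have : (((m₀+K+1 : ℕ)):ℝ) + 1 = (m₀:ℝ)+(K:ℝ)+2 := by push_cast; ring
      rw [this]
      field_simp
    have h1 : (L:ℝ) * rr x (m₀+K) - a (m₀+K+1) L ≤ ((L:ℝ)-1) * a (m₀+K+1) L := by
      have := Breg K
      have hL0 : (0:ℝ) ≤ (L:ℝ) := Nat.cast_nonneg L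
      nlinarith [mul_le_mul_of_nonneg_left (Breg K) hL0]
    have h2 : a (m₀+K+1) L ≤ a (m₀+K+1) 1 := a_anti_le _ hL1
    have h3 : ((L:ℝ)) < U₀ * ((m₀:ℝ)+(K:ℝ)+2) := by
      have hKr : (L:ℝ)/U₀ < (K:ℝ) := hK
      rw [div_lt_iff₀ hU₀] at hKr
      have : (K:ℝ) ≤ (m₀:ℝ)+(K:ℝ)+2 := by
        have := Nat.cast_nonneg (α := ℝ) m₀
        linarith
      nlinarith
    have h4 := hU K
    have hapos := a_pos (m₀+K+1) 1
    have haposL := a_pos (m₀+K+1) L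
    have hL0 : (0:ℝ) ≤ (L:ℝ) := Nat.cast_nonneg L
    nlinarith [mul_le_mul_of_nonneg_left h2 (show (0:ℝ) ≤ (L:ℝ)-1+1 by linarith)]
  · -- A-regime
    push_neg at hBex
    have hAs : ∀ m, N₂ ≤ m → a (m+1) L < rr x m := hBex
    by_cases hclash : ∃ m, N₂ ≤ m ∧ rr x m - a (m+1) L = S (m+2) (L+1)
    · -- a clash occurs at step m+1
      obtain ⟨m, hmN₂, hcl⟩ := hclash
      have hmN : N ≤ m := by omega
      have hr0 := rr_pos x hx m
      have hr1 := rr_pos x hx (m+1)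
      have hf1 : pick (m+1) (rr x m) L = L + 1 :=
        pick_eq_clash (by omega) hr0 (hAs m hmN₂)
          (by rw [show m+1+1 = m+2 from rfl]; exact hcl)
      have hv1 : rr x (m+1) = rr x m - a (m+1) (L+1) := by rw [hrs m hmN, hf1]
      have htel1 : a (m+1) L - a (m+2) L = (L:ℝ) * a (m+1) (L+1) := a_telescope (m+1) L
      have hSrec : S (m+2) (L+1) = a (m+2) (L+1) + S (m+3) (L+1) := S_rec (m+2) L hL1
      have hA2 : a (m+2) L < rr x (m+1) := hAs (m+1) (by omega)
      have hLr1 : (1:ℝ) ≤ (L:ℝ) := by exact_mod_cast hL1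
      have hnc2 : rr x (m+1) - a (m+2) L ≠ S (m+3) (L+1) := by
        intro h
        have hpos2 := a_pos (m+2) (L+1)
        have hge : (0:ℝ) ≤ ((L:ℝ)-1) * a (m+1) (L+1) :=
          mul_nonneg (by linarith) (le_of_lt (a_pos (m+1) (L+1)))
        nlinarith [hv1, hcl, htel1, hSrec]
      have hf2 : pick (m+2) (rr x (m+1)) L = L :=
        pick_eq_noclash (by omega) hr1 hA2
          (by rw [show m+2+1 = m+3 from rfl]; exact hnc2)
      have hv2 : rr x (m+2) = rr x (m+1) - a (m+2) L := by
        rw [show m+2 = (m+1)+1 from rfl, hrs (m+1) (by omega), hf2]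
      have hval2 : rr x (m+2) = S (m+2) (L+1) + ((L:ℝ)-1) * a (m+1) (L+1) := by
        rw [hv2, hv1]
        linarith [hcl, htel1]
      rcases Nat.lt_or_ge L 2 with hLlt | hL2
      · -- L = 1 : one more explicit step forces a raise
        have hLeq : L = 1 := by omega
        have hS2eq : ∀ n : ℕ, S n 2 = a n 1 := by
          intro n
          rw [show (2:ℕ) = 1 + 1 from rfl, S_eq1 n 1 le_rfl]
          norm_num
        have hval2' : rr x (m+2) = a (m+2) 1 := by
          rw [hval2, hLeq]
          norm_num
          rw [hS2eq (m+2)]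
        have htel2 : a (m+2) 1 - a (m+3) 1 = a (m+2) 2 := by
          have := a_telescope (m+2) 1
          norm_num at this
          exact this
        have hstrict : a (m+2) 2 < a (m+4) 1 := by
          rw [a_two, a_one]
          rw [inv_lt_inv₀ (by positivity) (by positivity)]
          push_cast
          nlinarith [Nat.cast_nonneg (α := ℝ) m]
        have hA3 : a (m+3) L < rr x (m+2) := hAs (m+2) (by omega)
        have hnc3 : rr x (m+2) - a (m+3) L ≠ S (m+4) (L+1) := by
          rw [hLeq, hval2', hS2eq (m+4)]
          intro h
          rw [htel2] at h
          rw [h] at hstrict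
          exact lt_irrefl _ hstrict
        have hf3 : pick (m+3) (rr x (m+2)) L = L :=
          pick_eq_noclash (by omega) (rr_pos x hx (m+2)) hA3
            (by rw [show m+3+1 = m+4 from rfl]; exact hnc3)
        have hv3 : rr x (m+3) = rr x (m+2) - a (m+3) L := by
          rw [show m+3 = (m+2)+1 from rfl, hrs (m+2) (by omega), hf3]
        have hcond3 : rr x (m+3) ≤ S (m+4) (L+1) ∧ (L+1)^2 ≤ m+3 := by
          constructor
          · rw [hv3, hLeq, hval2', htel2, hS2eq (m+4)]
            exact le_of_lt hstrict
          · rw [hLeq]; omega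
        have hLL2 : LL x (m+2) = L := hcon (m+2) (by omega)
        have hLLs := LL_succ x (m+2)
        rw [hLL2, show m+2+1 = m+3 from rfl, show m+2+2 = m+4 from rfl] at hLLs
        rw [if_pos hcond3] at hLLs
        have := hcon (m+3) (by omega)
        omega
      · -- L ≥ 2 : contradiction with W3
        have hW3 := W3 (L := L) (m := m) hL2 (by omega)
        have hA3 := hAs (m+2) (by omega)
        rw [hval2, show m+2+1 = m+3 from rfl] at hA3
        linarith
    · -- no clash ever: every step takes `a (m+1) L`
      push_neg at hclash
      have hstepL : ∀ m, N₂ ≤ m → rr x (m+1) = rr x m - a (m+1) L := by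
        intro m hm
        have hf : pick (m+1) (rr x m) L = L :=
          pick_eq_noclash (by omega) (rr_pos x hx m) (hAs m hm)
            (by rw [show m+1+1 = m+2 from rfl]; exact hclash m hm)
        rw [hrs m (by omega), hf]
      rcases Nat.lt_or_ge L 2 with hLlt | hL2
      · -- L = 1 : harmonic divergence
        have hLeq : L = 1 := by omega
        have hsum : ∀ k, rr x (N₂+k) = rr x N₂ - ∑ j ∈ Finset.range k, a (N₂+j+1) 1 := by
          intro k
          induction k with
          | zero => simp
          | succ k ih =>
            rw [Finset.sum_range_succ, show N₂+(k+1) = (N₂+k)+1 from rfl,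
              hstepL (N₂+k) (by omega), ih]
            rw [hLeq]
            ring
        set F : ℕ → ℝ := fun n => ∑ i ∈ Finset.range n, (1 / (i + 1) : ℝ) with hF
        have hFsucc : ∀ n : ℕ, F (n+1) = F n + 1/((n:ℝ)+1) := by
          intro n
          simp only [hF]
          rw [Finset.sum_range_succ]
        have hTF : ∀ k, ∑ j ∈ Finset.range k, a (N₂+j+1) 1 = F (N₂+1+k) - F (N₂+1) := by
          intro k
          induction k with
          | zero => simp
          | succ k ih =>
            rw [Finset.sum_range_succ, ih, show N₂+1+(k+1) = (N₂+1+k)+1 from rfl,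
              hFsucc (N₂+1+k)]
            have ha : a (N₂+k+1) 1 = 1/((((N₂+1+k : ℕ)):ℝ)+1) := by
              rw [a_one, one_div]
              push_cast
              ring_nf
            rw [ha]
            ring
        have hFmono : Monotone F := by
          apply monotone_nat_of_le_succ
          intro n
          have h := hFsucc n
          have : (0:ℝ) ≤ 1 / ((n:ℝ)+1) := by positivity
          linarith
        obtain ⟨n₀, hn₀⟩ :=
          (tendsto_atTop.1 Real.tendsto_sum_range_one_div_nat_succ_atTop
            (rr x N₂ + F (N₂+1) + 1)).exists
        have hkey : rr x N₂ + F (N₂+1) + 1 ≤ F (N₂+1+n₀) :=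
          le_trans hn₀ (hFmono (by omega))
        have := hsum n₀
        rw [hTF n₀] at this
        have := rr_pos x hx (N₂+n₀)
        linarith
      · -- L ≥ 2 : the invariant gap is constant, but S → 0
        have hLLN₂ : LL x N₂ = L := hcon N₂ (by omega)
        have hi2 : rr x N₂ < S (N₂+1) L := by
          have h := ((inv x hx N₂).2 (by rw [hLLN₂]; omega)).1
          rwa [hLLN₂] at h
        obtain ⟨M, hM⟩ : ∃ M, L = M + 1 := ⟨L - 1, by omega⟩
        have hM1 : 1 ≤ M := by omega
        have hE : ∀ k, S (N₂+k+1) L - rr x (N₂+k) = S (N₂+1) L - rr x N₂ := by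
          intro k
          induction k with
          | zero => rfl
          | succ k ih =>
            have hrec : S (N₂+k+1) L = a (N₂+k+1) L + S (N₂+k+2) L := by
              rw [hM]
              exact S_rec (N₂+k+1) M hM1
            rw [show N₂+(k+1) = (N₂+k)+1 from rfl, hstepL (N₂+k) (by omega),
              show (N₂+k)+1+1 = N₂+k+2 from rfl]
            linarith
        obtain ⟨K, hK⟩ := exists_nat_gt (1/(S (N₂+1) L - rr x N₂))
        have hc0 : 0 < S (N₂+1) L - rr x N₂ := by linarith
        have hSle : S (N₂+K+1) L ≤ a (N₂+K+1) 1 := by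
          rw [hM]
          exact S_le (N₂+K+1) M hM1
        have hone : a (N₂+K+1) 1 * ((N₂:ℝ)+(K:ℝ)+2) = 1 := by
          rw [a_one]
          have : (((N₂+K+1 : ℕ)):ℝ) + 1 = (N₂:ℝ)+(K:ℝ)+2 := by push_cast; ring
          rw [this]
          field_simp
        have hsmall : a (N₂+K+1) 1 < S (N₂+1) L - rr x N₂ := by
          rw [div_lt_iff₀ hc0] at hK
          have h2 : (K:ℝ) ≤ (N₂:ℝ)+(K:ℝ)+2 := by
            have := Nat.cast_nonneg (α := ℝ) N₂
            linarith
          have hp := a_pos (N₂+K+1) 1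
          nlinarith
        have := hE K
        have := rr_pos x hx (N₂+K)
        linarith

lemma LL_unbounded (x : ℝ) (hx : 0 < x) : ∀ K, ∃ n, K ≤ LL x n := by
  intro K
  induction K with
  | zero => exact ⟨0, Nat.zero_le _⟩
  | succ K ih =>
    obtain ⟨n, hn⟩ := ih
    have hne : ¬ ∀ m, n ≤ m → LL x m = LL x n := fun h => noraise x hx n h
    push_neg at hne
    obtain ⟨m, hm1, hm2⟩ := hne
    have := LL_mono x hm1
    exact ⟨m, by omega⟩

lemma ff_ge_floor (x : ℝ) (hx : 0 < x) (n : ℕ) : LL x n ≤ ff x (n+1) :=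
  (pick_spec (by omega) (rr_pos x hx n) (LL x n)).1

lemma ff_ge_one (x : ℝ) (hx : 0 < x) (n : ℕ) : 1 ≤ ff x n := by
  cases n with
  | zero => exact le_refl 1
  | succ n => exact le_trans (LL_one_le x n) (ff_ge_floor x hx n)

lemma ff_tendsto (x : ℝ) (hx : 0 < x) : Tendsto (ff x) atTop atTop := by
  rw [tendsto_atTop_atTop]
  intro b
  obtain ⟨n₀, hn₀⟩ := LL_unbounded x hx b
  refine ⟨n₀ + 1, ?_⟩
  intro n hn
  obtain ⟨m, rfl⟩ : ∃ m, n = m + 1 := ⟨n - 1, by omega⟩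
  calc b ≤ LL x n₀ := hn₀
    _ ≤ LL x m := LL_mono x (by omega)
    _ ≤ ff x (m+1) := ff_ge_floor x hx m

lemma rr_anti (x : ℝ) (hx : 0 < x) : Antitone (rr x) := by
  apply antitone_nat_of_succ_le
  intro n
  rw [rr_succ]
  have := a_pos (n+1) (ff x (n+1))
  linarith

lemma rr_small (x : ℝ) (hx : 0 < x) (N : ℕ) : ∃ m, N ≤ m ∧ rr x m ≤ a (m+1) 1 := by
  have hne : ¬ ∀ m, N ≤ m → LL x m = LL x N := fun h => noraise x hx N h
  push_neg at hne
  have hex : ∃ k, LL x (N+k+1) ≠ LL x N := by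
    obtain ⟨m, hm1, hm2⟩ := hne
    obtain ⟨k, rfl⟩ : ∃ k, m = N + k + 1 := by
      refine ⟨m - N - 1, ?_⟩
      rcases Nat.lt_or_ge N m with h | h
      · omega
      · exfalso
        have : m = N := by omega
        exact hm2 (by rw [this])
    exact ⟨k, hm2⟩
  classical
  set k₀ := Nat.find hex with hk₀
  have hspec : LL x (N+k₀+1) ≠ LL x N := Nat.find_spec hex
  have hbefore : LL x (N+k₀) = LL x N := by
    rcases Nat.eq_zero_or_pos k₀ with h | h
    · rw [h]; rfl
    · have := Nat.find_min hex (m := k₀ - 1) (by omega)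
      push_neg at this
      rw [show N + (k₀-1) + 1 = N + k₀ by omega] at this
      exact this
  have hLLs := LL_succ x (N+k₀)
  by_cases hcond : rr x (N+k₀+1) ≤ S (N+k₀+2) (LL x (N+k₀) + 1) ∧ (LL x (N+k₀) + 1)^2 ≤ N+k₀+1
  · refine ⟨N+k₀+1, by omega, ?_⟩
    have h1 := hcond.1
    have h2 : S (N+k₀+2) (LL x (N+k₀) + 1) ≤ a (N+k₀+2) 1 :=
      S_le (N+k₀+2) (LL x (N+k₀)) (LL_one_le x (N+k₀))
    calc rr x (N+k₀+1) ≤ S (N+k₀+2) (LL x (N+k₀) + 1) := h1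
      _ ≤ a (N+k₀+2) 1 := h2
      _ = a ((N+k₀+1)+1) 1 := rfl
  · exfalso
    rw [show N+k₀+1+1 = N+k₀+2 from rfl] at hLLs
    rw [if_neg hcond] at hLLs
    rw [hbefore] at hLLs
    exact hspec hLLs

lemma rr_tendsto_zero (x : ℝ) (hx : 0 < x) : Tendsto (rr x) atTop (𝓝 0) := by
  rw [Metric.tendsto_atTop]
  intro ε hε
  obtain ⟨N, hN⟩ := exists_nat_gt (1/ε)
  obtain ⟨m, hm1, hm2⟩ := rr_small x hx N
  refine ⟨m, ?_⟩
  intro n hn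
  have h1 : rr x n ≤ rr x m := rr_anti x hx hn
  have h2 : 0 < rr x n := rr_pos x hx n
  rw [Real.dist_eq, sub_zero, abs_of_pos h2]
  have h3 : a (m+1) 1 < ε := by
    rw [a_one]
    have hc : ((m:ℝ)+1)+1 = (m:ℝ)+2 := by ring
    have hN' : (N:ℝ) ≤ (m:ℝ) := by exact_mod_cast hm1
    rw [div_lt_iff₀ hε] at hN
    have hp : (0:ℝ) < ((m+1:ℕ):ℝ)+1 := by positivity
    rw [inv_lt_iff_one_lt_mul₀ hp]
    push_cast
    nlinarith
  linarith

lemma sum_eq (x : ℝ) (n : ℕ) :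
    ∑ i ∈ Finset.range n, a (i+1) (ff x (i+1)) = x - rr x n := by
  induction n with
  | zero => simp [rr_zero]
  | succ n ih =>
    rw [Finset.sum_range_succ, ih, rr_succ]
    ring

lemma cast_term (v k : ℕ) :
    (1:ℝ) / ((∏ i ∈ Finset.Icc 1 k, (v + i) : ℕ) : ℝ) = a v k := by
  rw [one_div, a]
  congr 1
  push_cast
  rfl

end Stmt0Aux

open Stmt0Aux in
/-- The set of all sums `∑_{n=1}^∞ 1/((n+1)(n+2)⋯(n+f(n)))`, as `f` ranges over all
sequences of positive integers tending to infinity, equals the whole interval `(0, ∞)`. -/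
theorem stmt0 :
    {x : ℝ | ∃ f : ℕ → ℕ, (∀ n, 1 ≤ f n) ∧ Tendsto f atTop atTop ∧
      HasSum (fun n : ℕ =>
        (1 : ℝ) / ((∏ i ∈ Finset.Icc 1 (f (n + 1)), (n + 1 + i) : ℕ) : ℝ)) x}
      = Set.Ioi 0 := by
  ext x
  simp only [Set.mem_setOf_eq, Set.mem_Ioi]
  constructor
  · rintro ⟨f, hf1, hf2, hsum⟩
    have hterm : ∀ n : ℕ, (0:ℝ) <
        (1 : ℝ) / ((∏ i ∈ Finset.Icc 1 (f (n + 1)), (n + 1 + i) : ℕ) : ℝ) := by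
      intro n
      apply div_pos one_pos
      have : 0 < (∏ i ∈ Finset.Icc 1 (f (n + 1)), (n + 1 + i) : ℕ) := by
        apply Finset.prod_pos
        intro i _
        omega
      exact_mod_cast this
    have h0 := le_hasSum hsum 0 (fun j _ => le_of_lt (hterm j))
    exact lt_of_lt_of_le (hterm 0) h0
  · intro hx
    refine ⟨ff x, fun n => ff_ge_one x hx n, ff_tendsto x hx, ?_⟩
    have hfun : (fun n : ℕ =>
        (1 : ℝ) / ((∏ i ∈ Finset.Icc 1 (ff x (n + 1)), (n + 1 + i) : ℕ) : ℝ))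
        = fun n : ℕ => a (n+1) (ff x (n+1)) := by
      funext n
      exact cast_term (n+1) (ff x (n+1))
    rw [hfun]
    have hnonneg : ∀ i : ℕ, (0:ℝ) ≤ a (i+1) (ff x (i+1)) := fun i => le_of_lt (a_pos _ _)
    rw [hasSum_iff_tendsto_nat_of_nonneg hnonneg]
    have h1 : Tendsto (fun n => x - rr x n) atTop (𝓝 (x - 0)) :=
      tendsto_const_nhds.sub (rr_tendsto_zero x hx)
    rw [sub_zero] at h1
    apply h1.congr
    intro n
    rw [sum_eq x n]
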